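/- Let (R, m) be a commutative noetherian local ring, I an ideal of R, and M ⊆ X an extension of R-modules with Hom_R(R/I, X) = 0 and Ext^1_R(R/I, X) = 0. Then there is an isomorphism of R-modules Ext^1_R(R/I, M) ≅ (M :_X I)/M. -/

import Mathlib

open CategoryTheory

/-- For a submodule `Y` of `X` and an ideal `I`, the submodule `(Y :_X I) = {u ∈ X | I•u ⊆ Y}`. -/
def colonSub {R : Type u} [CommRing R] {X : Type v} [AddCommGroup X] [Module R X]
    (Y : Submodule R X) (I : Ideal R) : Submodule R X where
  carrier := {u | ∀ r ∈ I, r • u ∈ Y}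
  add_mem' := by
    intro a b ha hb r hr
    rw [smul_add]
    exact Y.add_mem (ha r hr) (hb r hr)
  zero_mem' := by
    intro r hr
    simp
  smul_mem' := by
    intro c u hu r hr
    rw [smul_comm]
    exact Y.smul_mem c (hu r hr)

open CategoryTheory Limits HomologicalComplex

set_option maxHeartbeats 1000000 in
/-- Bemerkung 1.10: Let `M ⊆ X` be an extension of `R`-modules with `Hom_R(R/I, X) = 0` and
`Ext¹_R(R/I, X) = 0`. Then `Ext¹_R(R/I, M) ≅ (M :_X I)/M` as `R`-modules. -/
theorem ext_iso_colon_quotient {R : Type u} [CommRing R] [IsNoetherianRing R] [IsLocalRing R]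
    (I : Ideal R) (X : Type u) [AddCommGroup X] [Module R X] (M : Submodule R X)
    (hHom : ∀ f : (R ⧸ I) →ₗ[R] X, f = 0)
    (hExt : Subsingleton (((Ext R (ModuleCat.{u} R) 1).obj
        (Opposite.op (ModuleCat.of R (R ⧸ I)))).obj (ModuleCat.of R X))) :
    Nonempty
      ((((Ext R (ModuleCat.{u} R) 1).obj
          (Opposite.op (ModuleCat.of R (R ⧸ I)))).obj (ModuleCat.of R ↥M)) ≃ₗ[R]
        (↥(colonSub M I) ⧸ Submodule.comap (colonSub M I).subtype M)) := by
  classical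
  obtain ⟨P⟩ : Nonempty (ProjectiveResolution (ModuleCat.of R (R ⧸ I))) :=
    HasProjectiveResolution.out
  set A : ModuleCat.{u} R := ModuleCat.of R (R ⧸ I) with hA
  set Mc : ModuleCat.{u} R := ModuleCat.of R ↥M with hMc
  set Xc : ModuleCat.{u} R := ModuleCat.of R X with hXc
  set Qc : ModuleCat.{u} R := ModuleCat.of R (X ⧸ M) with hQc
  let i : Mc ⟶ Xc := ModuleCat.ofHom M.subtype
  let p : Xc ⟶ Qc := ModuleCat.ofHom M.mkQ
  haveI : Epi p := (ModuleCat.epi_iff_surjective p).2 (Submodule.mkQ_surjective M)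
  -- the Hom complexes
  let KM := P.complex.linearYonedaObj R Mc
  let KX := P.complex.linearYonedaObj R Xc
  let KQ := P.complex.linearYonedaObj R Qc
  -- the morphisms of complexes
  let φ : KM ⟶ KX :=
    { f := fun n => ModuleCat.ofHom (Linear.rightComp R (P.complex.X n) i)
      comm' := by
        intro a b hab
        ext g
        rfl }
  let ψ : KX ⟶ KQ :=
    { f := fun n => ModuleCat.ofHom (Linear.rightComp R (P.complex.X n) p)
      comm' := by
        intro a b hab
        ext g
        rfl }
  have hip : i ≫ p = 0 := by
    ext m
    exact (Submodule.Quotient.mk_eq_zero M).2 m.2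
  have hφψ : ∀ n : ℕ, φ.f n ≫ ψ.f n = 0 := by
    intro n
    ext g
    show ((g ≫ i) ≫ p) = _
    have h0 : ∀ g' : P.complex.X n ⟶ Mc, g' ≫ (i ≫ p) = 0 := fun g' => by rw [hip, comp_zero]
    exact h0 g
  let S : ShortComplex (HomologicalComplex (ModuleCat.{u} R) (ComplexShape.up ℕ)) :=
    ShortComplex.mk φ ψ (by
      ext n x
      exact congrArg (fun (q : KM.X n ⟶ KQ.X n) => q x) (hφψ n))
  have hdeg : ∀ n : ℕ, (S.map (HomologicalComplex.eval _ _ n)).ShortExact := by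
    intro n
    let Sn : ShortComplex (ModuleCat.{u} R) := ShortComplex.mk (φ.f n) (ψ.f n) (hφψ n)
    have heq : S.map (HomologicalComplex.eval _ _ n) = Sn := rfl
    rw [heq]
    haveI hmono : Mono Sn.f := by
      rw [ModuleCat.mono_iff_injective]
      intro g g' h
      exact ModuleCat.hom_ext <| LinearMap.ext fun a =>
        Subtype.ext (congrArg (fun (q : P.complex.X n ⟶ Xc) => q a) h)
    haveI hepi : Epi Sn.g := by
      rw [ModuleCat.epi_iff_surjective]
      intro h
      exact ⟨Projective.factorThru h p, Projective.factorThru_comp h p⟩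
    exact ShortComplex.ShortExact.mk (by
      rw [ShortComplex.moduleCat_exact_iff]
      intro g hg
      let g' : P.complex.X n ⟶ Xc := g
      have hmem : ∀ a : P.complex.X n, g' a ∈ M := by
        intro a
        have h1 : (g' ≫ p) a = 0 := by
          rw [show g' ≫ p = 0 from hg]
          rfl
        exact (Submodule.Quotient.mk_eq_zero M).1 h1
      exact ⟨ModuleCat.ofHom (LinearMap.codRestrict M g'.hom hmem), rfl⟩)
  have hS : S.ShortExact := HomologicalComplex.shortExact_of_degreewise_shortExact S hdeg
  have hrel : (ComplexShape.up ℕ).Rel 0 1 := rfl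
  -- the projection `P₀ → R/I`
  let σ : ((ChainComplex.single₀ (ModuleCat.{u} R)).obj A).X 0 ≅ A :=
    HomologicalComplex.singleObjXSelf _ 0 A
  haveI hepi0 : Epi (P.π.f 0) :=
    ⟨fun {W} k l h => Cofork.IsColimit.hom_ext P.isColimitCokernelCofork h⟩
  -- H⁰ of the middle complex vanishes
  have hH0X : IsZero (KX.homology 0) := by
    rw [← HomologicalComplex.exactAt_iff_isZero_homology,
      HomologicalComplex.exactAt_iff' KX 0 0 1 (by simp) (by simp),
      ShortComplex.moduleCat_exact_iff]
    intro g hg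
    let g' : P.complex.X 0 ⟶ Xc := g
    have hg' : P.complex.d 1 0 ≫ g' = 0 := hg
    have hzero : σ.inv ≫ P.exact₀.desc g' hg' = 0 :=
      ModuleCat.hom_ext (hHom (σ.inv ≫ P.exact₀.desc g' hg').hom)
    have hh : P.exact₀.desc g' hg' = 0 := by
      rw [← σ.hom_inv_id_assoc (P.exact₀.desc g' hg'), hzero, comp_zero]
    have hgz : g' = 0 := by
      conv_lhs => rw [← P.exact₀.g_desc g' hg']
      rw [hh, comp_zero]
    refine ⟨0, ?_⟩
    rw [map_zero]
    exact hgz.symm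
  -- H¹ of the middle complex vanishes
  have hH1X : IsZero (KX.homology 1) := by
    haveI := hExt
    exact IsZero.of_iso (ModuleCat.isZero_of_subsingleton _) (P.isoExt 1 Xc).symm
  -- the connecting map is an isomorphism
  let δ := hS.δ 0 1 hrel
  haveI : Mono δ := (hS.homology_exact₃ 0 1 hrel).mono_g
    (hH0X.eq_of_src (HomologicalComplex.homologyMap S.g 0) 0)
  haveI : Epi δ := (hS.homology_exact₁ 0 1 hrel).epi_f
    (hH1X.eq_of_tgt (HomologicalComplex.homologyMap S.f 1) 0)
  haveI : IsIso δ := isIso_of_mono_of_epi δ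
  -- concrete description of H⁰ of the quotient complex
  let T : ShortComplex (ModuleCat.{u} R) := KQ.sc' 0 0 1
  let eT : KQ.homology 0 ≅ T.homology :=
    ShortComplex.homologyMapIso (KQ.isoSc' 0 0 1 (by simp) (by simp))
  let D := T.moduleCatLeftHomologyData
  have hTf : T.f = 0 := KQ.shape 0 0 (by simp)
  have hrange : LinearMap.range T.moduleCatToCycles = ⊥ := by
    rw [eq_bot_iff]
    rintro x ⟨y, rfl⟩
    refine Submodule.mem_bot R |>.2 ?_
    ext
    show T.f y = 0
    rw [hTf]
    rfl
  let E1 : (↥(LinearMap.ker T.g.hom) ⧸ LinearMap.range T.moduleCatToCycles) ≃ₗ[R]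
      ↥(LinearMap.ker T.g.hom) := Submodule.quotEquivOfEqBot _ hrange
  -- the canonical linear map from the colon module to `ker T.g`
  let π0' : P.complex.X 0 ⟶ A := P.π.f 0 ≫ σ.hom
  haveI : Epi π0' := epi_comp _ _
  let hmap : ↥(colonSub M I) → (A ⟶ Qc) := fun u =>
    ModuleCat.ofHom (Submodule.liftQ I
      (LinearMap.toSpanSingleton R (X ⧸ M) (Submodule.Quotient.mk u.1)) (by
        intro r hr
        rw [LinearMap.mem_ker, LinearMap.toSpanSingleton_apply,
          ← Submodule.Quotient.mk_smul]
        exact (Submodule.Quotient.mk_eq_zero M).2 (u.2 r hr)))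
  have hmap_apply : ∀ (u : ↥(colonSub M I)) (r : R),
      hmap u (Submodule.Quotient.mk r) = r • Submodule.Quotient.mk u.1 := by
    intro u r
    rfl
  have hker : ∀ u : ↥(colonSub M I), π0' ≫ hmap u ∈ LinearMap.ker T.g.hom := by
    intro u
    show P.complex.d 1 0 ≫ (π0' ≫ hmap u) = 0
    rw [← Category.assoc]
    rw [show P.complex.d 1 0 ≫ π0' = 0 by
      rw [← Category.assoc (P.complex.d 1 0) (P.π.f 0) σ.hom, P.complex_d_comp_π_f_zero,
        zero_comp]]
    rw [zero_comp]
  let β : ↥(colonSub M I) →ₗ[R] ↥(LinearMap.ker T.g.hom) :=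
    { toFun := fun u => ⟨π0' ≫ hmap u, hker u⟩
      map_add' := by
        intro u v
        apply Subtype.ext
        show π0' ≫ hmap (u + v) = π0' ≫ hmap u + π0' ≫ hmap v
        ext a
        obtain ⟨r, hr⟩ := Submodule.Quotient.mk_surjective I (π0' a)
        show hmap (u + v) (π0' a) = hmap u (π0' a) + hmap v (π0' a)
        rw [← hr, hmap_apply, hmap_apply, hmap_apply]
        show r • Submodule.Quotient.mk (u.1 + v.1) = _
        rw [Submodule.Quotient.mk_add, smul_add]
      map_smul' := by
        intro c u
        apply Subtype.ext
        show π0' ≫ hmap (c • u) = c • (π0' ≫ hmap u)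
        ext a
        obtain ⟨r, hr⟩ := Submodule.Quotient.mk_surjective I (π0' a)
        show hmap (c • u) (π0' a) = c • hmap u (π0' a)
        rw [← hr, hmap_apply, hmap_apply]
        show r • Submodule.Quotient.mk (c • u.1) = c • (r • Submodule.Quotient.mk u.1)
        rw [Submodule.Quotient.mk_smul, smul_comm] }
  have hβker : LinearMap.ker β = Submodule.comap (colonSub M I).subtype M := by
    ext u
    constructor
    · intro hu
      have hval : π0' ≫ hmap u = 0 := congrArg Subtype.val hu
      have hm0 : hmap u = 0 := by
        refine (cancel_epi π0').1 ?_
        rw [hval, comp_zero]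
      have h1 : hmap u (Submodule.Quotient.mk (1 : R)) = 0 := by
        rw [hm0]
        rfl
      rw [hmap_apply, one_smul] at h1
      exact (Submodule.Quotient.mk_eq_zero M).1 h1
    · intro hu
      apply Subtype.ext
      show π0' ≫ hmap u = 0
      have hm0 : hmap u = 0 := by
        apply ModuleCat.hom_ext
        apply Submodule.linearMap_qext
        refine LinearMap.ext fun r => ?_
        show hmap u (Submodule.Quotient.mk r) = 0
        rw [hmap_apply]
        have h2 : (Submodule.Quotient.mk u.1 : X ⧸ M) = 0 :=
          (Submodule.Quotient.mk_eq_zero M).2 hu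
        rw [h2, smul_zero]
      rw [hm0, comp_zero]
  let βq : (↥(colonSub M I) ⧸ Submodule.comap (colonSub M I).subtype M) →ₗ[R]
      ↥(LinearMap.ker T.g.hom) := Submodule.liftQ _ β (le_of_eq hβker.symm)
  have hβq_inj : Function.Injective βq := by
    rw [← LinearMap.ker_eq_bot]
    exact Submodule.ker_liftQ_eq_bot _ _ _ (le_of_eq hβker)
  have hβq_surj : Function.Surjective βq := by
    rintro ⟨g, hgker⟩
    let g' : P.complex.X 0 ⟶ Qc := g
    have hg' : P.complex.d 1 0 ≫ g' = 0 := hgker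
    set h : A ⟶ Qc := σ.inv ≫ P.exact₀.desc g' hg' with hh
    set y : X ⧸ M := h (Submodule.Quotient.mk (1 : R)) with hy
    obtain ⟨x, hx0⟩ := Submodule.mkQ_surjective M y
    have hx : (Submodule.Quotient.mk x : X ⧸ M) = y := hx0
    have hkey : ∀ r : R, h (Submodule.Quotient.mk r) = r • y := by
      intro r
      have : (Submodule.Quotient.mk r : R ⧸ I) = r • Submodule.Quotient.mk 1 := by
        rw [← Submodule.Quotient.mk_smul, smul_eq_mul, mul_one]
      rw [this, map_smul, hy]
    have hxmem : x ∈ colonSub M I := by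
      intro r hr
      rw [← Submodule.Quotient.mk_eq_zero M, Submodule.Quotient.mk_smul]
      rw [hx, ← hkey r]
      have h3 : (Submodule.Quotient.mk r : R ⧸ I) = 0 :=
        (Submodule.Quotient.mk_eq_zero I).2 hr
      rw [h3, map_zero]
    refine ⟨Submodule.Quotient.mk ⟨x, hxmem⟩, ?_⟩
    apply Subtype.ext
    show π0' ≫ hmap ⟨x, hxmem⟩ = g'
    have hm : hmap ⟨x, hxmem⟩ = h := by
      apply ModuleCat.hom_ext
      apply Submodule.linearMap_qext
      refine LinearMap.ext fun r => ?_
      show hmap ⟨x, hxmem⟩ (Submodule.Quotient.mk r) = h (Submodule.Quotient.mk r)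
      rw [hmap_apply, hkey r]
      show r • (Submodule.Quotient.mk x : X ⧸ M) = r • y
      rw [hx]
    rw [hm, hh]
    show (P.π.f 0 ≫ σ.hom) ≫ σ.inv ≫ P.exact₀.desc g' hg' = _
    rw [Category.assoc, σ.hom_inv_id_assoc]
    exact P.exact₀.g_desc g' hg'
  -- assembling everything
  let bigIso : ((((Ext R (ModuleCat.{u} R) 1).obj (Opposite.op A)).obj Mc)) ≅ D.H :=
    P.isoExt 1 Mc ≪≫ (asIso δ).symm ≪≫ eT ≪≫ D.homologyIso
  exact ⟨bigIso.toLinearEquiv.trans (E1.trans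
    ((LinearEquiv.ofBijective βq ⟨hβq_inj, hβq_surj⟩).symm))⟩
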